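/- Let V be a nonzero finite-dimensional vector space over an algebraically closed field with a nondegenerate symplectic form (,), and let A ∈ End(V) be nilpotent with (Ax, x) = 0 for all x (i.e., the bilinear form (x,y) ↦ (Ax,y) is alternating). Then the kernel of A has even dimension, and in particular dim ker A ≥ 2. -/

import Mathlib

universe u

open Module Submodule

/-- A nondegenerate alternating bilinear form exists only on even-dimensional spaces. -/
lemma even_finrank_of_alt_nondeg (k : Type*) [Field k] :
    ∀ (n : ℕ) (V : Type u) [AddCommGroup V] [Module k V] [FiniteDimensional k V],
      Module.finrank k V = n → ∀ B : LinearMap.BilinForm k V, B.IsAlt → B.Nondegenerate →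
        Even n := by
  intro n
  induction n using Nat.strong_induction_on with
  | _ n ih =>
    intro V _ _ _ hn B halt hnd
    rcases Nat.eq_zero_or_pos n with h0 | hpos
    · simp [h0]
    have hVnt : Nontrivial V := by
      rw [← Module.finrank_pos_iff (R := k)]; omega
    obtain ⟨x, hx⟩ := exists_ne (0 : V)
    have hy : ∃ y, B x y ≠ 0 := by
      by_contra h; push_neg at h; exact hx (hnd.1 x h)
    obtain ⟨y, hy⟩ := hy
    have hyne : y ≠ 0 := by rintro rfl; simp at hy
    set W : Submodule k V := Submodule.span k {x, y} with hWdef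
    have hxW : x ∈ W := Submodule.subset_span (by simp)
    have hyW : y ∈ W := Submodule.subset_span (by simp)
    have hrefl : B.IsRefl := halt.isRefl
    have hres : (B.restrict W).Nondegenerate := by
      refine (LinearMap.IsRefl.nondegenerate_iff_separatingLeft (B := B.restrict W) (fun a b => hrefl a b)).mpr ?_
      rintro ⟨m, hm⟩ h
      rcases Submodule.mem_span_pair.mp hm with ⟨a, b, rfl⟩
      have h1 := h ⟨x, hxW⟩
      have h2 := h ⟨y, hyW⟩
      simp only [LinearMap.BilinForm.restrict_apply, map_add, map_smul,
        LinearMap.domRestrict_apply, LinearMap.add_apply,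
        LinearMap.smul_apply, smul_eq_mul] at h1 h2
      rw [halt.self_eq_zero x, ← LinearMap.IsAlt.neg halt x y] at h1
      rw [halt.self_eq_zero y] at h2
      have hb : b = 0 := by
        have : b * -(B x y) = 0 := by simpa using h1
        rcases mul_eq_zero.mp this with hb | hb
        · exact hb
        · exact absurd (neg_eq_zero.mp hb) hy
      have ha : a = 0 := by
        have : a * B x y = 0 := by simpa using h2
        rcases mul_eq_zero.mp this with ha | ha
        · exact ha
        · exact absurd ha hy
      ext
      simp [ha, hb]
    have hcompl := B.isCompl_orthogonal_of_restrict_nondegenerate hrefl hres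
    have hres' : (B.restrict (B.orthogonal W)).Nondegenerate := by
      rw [LinearMap.BilinForm.restrict_nondegenerate_iff_isCompl_orthogonal hrefl,
        B.orthogonal_orthogonal hnd hrefl]
      exact hcompl.symm
    have hli : LinearIndependent k ![x, y] := by
      rw [LinearIndependent.pair_iff]
      intro s t hst
      have h1 : B (s • x + t • y) y = 0 := by rw [hst]; simp
      simp only [map_add, map_smul, LinearMap.add_apply, LinearMap.smul_apply,
        smul_eq_mul, halt.self_eq_zero y] at h1
      have hs : s = 0 := by
        have : s * B x y = 0 := by simpa using h1
        rcases mul_eq_zero.mp this with hs | hs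
        · exact hs
        · exact absurd hs hy
      subst hs
      simp only [zero_smul, zero_add] at hst
      rcases smul_eq_zero.mp hst with ht | ht
      · exact ⟨rfl, ht⟩
      · exact absurd ht hyne
    have hdim : finrank k W = 2 := by
      have hset : ({x, y} : Set V) = Set.range ![x, y] := by
        ext z
        simp [Fin.exists_fin_two, or_comm]
      rw [hWdef, hset, finrank_span_eq_card hli]
      simp
    have hdimO : finrank k (B.orthogonal W) = n - 2 := by
      rw [LinearMap.BilinForm.finrank_orthogonal hnd, hn, hdim]
    have hn2 : 2 ≤ n := by
      rw [← hn, ← hdim]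
      exact finrank_le W
    have heven := ih (n - 2) (by omega) (B.orthogonal W) hdimO (B.restrict _)
      (fun z => halt z) hres'
    obtain ⟨m, hm⟩ := heven
    exact ⟨m + 1, by omega⟩

/-- Let `V` be a nonzero finite-dimensional vector space over an
algebraically closed field with a nondegenerate symplectic form `B`, and let
`A` be a nilpotent endomorphism of `V` with `B (A x) x = 0` for all `x`.
Then `ker A` has even dimension; in particular `dim ker A ≥ 2`. -/
theorem ker_nilpotent_even_dim
    (k V : Type*) [Field k] [IsAlgClosed k] [AddCommGroup V] [Module k V]
    [FiniteDimensional k V] (hV : Nontrivial V)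
    (B : LinearMap.BilinForm k V) (halt : B.IsAlt) (hnd : B.Nondegenerate)
    (A : Module.End k V) (hnil : IsNilpotent A)
    (hAalt : ∀ x : V, B (A x) x = 0) :
    Even (Module.finrank k (LinearMap.ker A)) ∧
      2 ≤ Module.finrank k (LinearMap.ker A) := by
  classical
  set C : LinearMap.BilinForm k V := B ∘ₗ (A : V →ₗ[k] V) with hCdef
  have hCapp : ∀ x y : V, C x y = B (A x) y := fun x y => rfl
  have hCalt : C.IsAlt := fun x => hAalt x
  obtain ⟨W, hW⟩ := Submodule.exists_isCompl (LinearMap.ker A)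
  -- the restriction of C to a complement W of ker A is nondegenerate
  have hresnd : (C.restrict W).Nondegenerate := by
    refine (LinearMap.IsRefl.nondegenerate_iff_separatingLeft (B := C.restrict W) (fun a b => hCalt.isRefl a b)).mpr ?_
    rintro ⟨w, hw⟩ h
    have hAw : ∀ z : V, B (A w) z = 0 := by
      intro z
      have hz : z ∈ LinearMap.ker A ⊔ W := by rw [hW.sup_eq_top]; trivial
      rcases Submodule.mem_sup.mp hz with ⟨u, hu, v, hv, rfl⟩
      have h1 : B (A w) u = 0 := by
        have := LinearMap.IsAlt.neg hCalt u w
        rw [hCapp u w, LinearMap.mem_ker.mp hu] at this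
        simp only [map_zero, LinearMap.zero_apply] at this
        rw [← hCapp w u, ← this, neg_zero]
      have h2 : B (A w) v = 0 := by
        have := h ⟨v, hv⟩
        simpa [hCapp] using this
      rw [map_add, h1, h2, add_zero]
    have hw0 : A w = 0 := hnd.1 _ hAw
    have : w ∈ LinearMap.ker A ⊓ W := ⟨LinearMap.mem_ker.mpr hw0, hw⟩
    rw [hW.inf_eq_bot] at this
    exact Subtype.ext this
  have hW_even : Even (Module.finrank k W) :=
    even_finrank_of_alt_nondeg k _ W rfl (C.restrict W) (fun z => hCalt z) hresnd
  have hV_even : Even (Module.finrank k V) :=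
    even_finrank_of_alt_nondeg k _ V rfl B halt hnd
  have hsum : Module.finrank k (LinearMap.ker A) + Module.finrank k W
      = Module.finrank k V := Submodule.finrank_add_eq_of_isCompl hW
  have hker_even : Even (Module.finrank k (LinearMap.ker A)) := by
    obtain ⟨a, ha⟩ := hW_even
    obtain ⟨b, hb⟩ := hV_even
    refine ⟨b - a, by omega⟩
  have hker_pos : 0 < Module.finrank k (LinearMap.ker A) := by
    rw [Module.finrank_pos_iff]
    by_contra hcon
    have hbot : LinearMap.ker A = ⊥ := by
      rw [not_nontrivial_iff_subsingleton] at hcon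
      exact Submodule.eq_bot_of_subsingleton
    have hinj : Function.Injective A := LinearMap.ker_eq_bot.mp hbot
    obtain ⟨n, hn⟩ := hnil
    have hinjn : Function.Injective (A ^ n : Module.End k V) := by
      intro a b hab
      rw [Module.End.pow_apply, Module.End.pow_apply] at hab
      exact hinj.iterate n hab
    obtain ⟨v, hv⟩ := exists_ne (0 : V)
    apply hv
    apply hinjn
    rw [hn]
    simp
  obtain ⟨m, hm⟩ := id hker_even
  exact ⟨hker_even, by omega⟩
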